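/- arXiv:2301.05090 — 7 statements merged into one kernel-verified Lean document; each statement's English description precedes it below -/
import Mathlib

section
/- Let 0 < r₁ ≤ r₂ ≤ ... ≤ rₙ < 1 be real numbers and c₁,...,cₙ nonzero reals, and define E(s) = Σᵢ cᵢ rᵢ^s. If the sequence c₁,...,cₙ has K sign changes, then the function E : ℝ → ℝ changes sign at most K times on ℝ. -/
open Finset

lemma signChain (e : ℕ → ℝ) : ∀ (b a : ℕ), a < b → (∀ i, i ≤ b → e i ≠ 0) →
    e a * e b < 0 → ∃ i, a ≤ i ∧ i < b ∧ e i * e (i + 1) < 0 := by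
  intro b
  induction b with
  | zero => omega
  | succ b ih =>
    intro a hab hnz hsgn
    rcases eq_or_lt_of_le (Nat.lt_succ_iff.mp hab) with h | h
    · exact ⟨a, le_rfl, hab, h ▸ hsgn⟩
    · rcases lt_or_ge (e b * e (b + 1)) 0 with hb | hb
      · exact ⟨b, by omega, by omega, hb⟩
      · have hb' : 0 < e b * e (b + 1) :=
          lt_of_le_of_ne hb (by
            intro hz
            rcases mul_eq_zero.mp hz.symm with h0 | h0
            · exact hnz b (by omega) h0
            · exact hnz (b + 1) le_rfl h0)
        have : e a * e b < 0 := by nlinarith [sq_nonneg (e (b+1))]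
        obtain ⟨i, h1, h2, h3⟩ := ih a h (fun i hi => hnz i (by omega)) this
        exact ⟨i, h1, by omega, h3⟩

lemma signConst (c : ℕ → ℝ) (n : ℕ) (h0 : c 0 ≠ 0)
    (hpos : ∀ i, i < n → 0 < c i * c (i + 1)) :
    ∀ i, i ≤ n → 0 < c 0 * c i := by
  intro i
  induction i with
  | zero => intro _; exact mul_self_pos.mpr h0
  | succ i ih =>
    intro hi
    have h1 := ih (by omega)
    have h2 := hpos i (by omega)
    nlinarith [sq_nonneg (c i)]

set_option maxHeartbeats 2000000 in
/-- Main auxiliary lemma over ℕ, by induction on `K`. -/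
lemma descartes_aux : ∀ (K n : ℕ) (ρ c : ℕ → ℝ),
    (∀ i, i ≤ n → 0 < ρ i) →
    (∀ i j, i ≤ j → j ≤ n → ρ i ≤ ρ j) →
    (∀ i, i ≤ n → c i ≠ 0) →
    (((Finset.range n).filter fun i => c i * c (i + 1) < 0).card ≤ K) →
    ∀ (m : ℕ) (t : ℕ → ℝ), (∀ i, i < m → t i < t (i + 1)) →
    (∀ i, i < m → (∑ q ∈ Finset.range (n + 1), c q * ρ q ^ t i) *
        (∑ q ∈ Finset.range (n + 1), c q * ρ q ^ t (i + 1)) < 0) →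
    m ≤ K := by
  intro K
  induction K with
  | zero =>
    intro n ρ c hρ hmono hc hcard m t ht halt
    by_contra hm
    push_neg at hm
    -- all adjacent products positive
    have hpos : ∀ i, i < n → 0 < c i * c (i + 1) := by
      intro i hi
      rcases lt_trichotomy (c i * c (i + 1)) 0 with h | h | h
      · exfalso
        have : i ∈ (Finset.range n).filter fun i => c i * c (i + 1) < 0 := by
          simp [Finset.mem_filter, Finset.mem_range, hi, h]
        have := Finset.card_pos.mpr ⟨i, this⟩
        omega
      · exact absurd (mul_eq_zero.mp h) (by
          push_neg
          exact ⟨hc i (by omega), hc (i + 1) (by omega)⟩)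
      · exact h
    have hsame := signConst c n (hc 0 (by omega)) hpos
    -- E has constant sign
    have hEsign : ∀ s : ℝ, 0 < c 0 * ∑ q ∈ Finset.range (n + 1), c q * ρ q ^ s := by
      intro s
      rw [Finset.mul_sum]
      apply Finset.sum_pos
      · intro q hq
        have hq' : q ≤ n := by simpa [Nat.lt_succ_iff] using hq
        have := hsame q hq'
        have := Real.rpow_pos_of_pos (hρ q hq') s
        calc (0:ℝ) < (c 0 * c q) * ρ q ^ s := by positivity
          _ = c 0 * (c q * ρ q ^ s) := by ring
      · exact ⟨0, Finset.mem_range.mpr (by omega)⟩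
    have h0 := halt 0 (by omega)
    have h1 := hEsign (t 0)
    have h2 := hEsign (t 1)
    norm_num at h0
    nlinarith [mul_pos h1 h2, mul_self_pos.mpr (hc 0 (Nat.zero_le n))]

  | succ K ih =>
    intro n ρ c hρ hmono hc hcard m t ht halt
    rcases eq_or_lt_of_le hcard with hcardeq | hlt
    swap
    · exact le_trans (ih n ρ c hρ hmono hc (by omega) m t ht halt) (by omega)
    -- pick a sign change index j
    have hfil : ((Finset.range n).filter fun i => c i * c (i + 1) < 0).Nonempty := by
      rw [← Finset.card_pos, hcardeq]; omega
    obtain ⟨j, hjmem⟩ := hfil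
    have hjn : j < n := by
      have := Finset.mem_filter.mp hjmem; simpa using this.1
    have hjsgn : c j * c (j + 1) < 0 := (Finset.mem_filter.mp hjmem).2
    set μ := ρ (j + 1) with hμdef
    have hμpos : 0 < μ := hρ (j + 1) (by omega)
    -- degenerate case: all bases equal μ
    by_cases hall : ∀ i, i ≤ n → ρ i = μ
    · rcases Nat.eq_zero_or_pos m with hm | hm
      · omega
      exfalso
      have hE : ∀ s : ℝ, ∑ q ∈ Finset.range (n + 1), c q * ρ q ^ s
          = (∑ q ∈ Finset.range (n + 1), c q) * μ ^ s := by
        intro s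
        rw [Finset.sum_mul]
        refine Finset.sum_congr rfl fun q hq => ?_
        rw [hall q (by simpa [Nat.lt_succ_iff] using hq)]
      have h0 := halt 0 hm
      rw [hE, hE] at h0
      norm_num at h0
      nlinarith [Real.rpow_pos_of_pos hμpos (t 0), Real.rpow_pos_of_pos hμpos (t 1),
        sq_nonneg (∑ q ∈ Finset.range (n + 1), c q),
        mul_pos (Real.rpow_pos_of_pos hμpos (t 0)) (Real.rpow_pos_of_pos hμpos (t 1))]
    push_neg at hall
    obtain ⟨i0, hi0n, hi0⟩ := hall
    -- derivative coefficients and flipped coefficients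
    set d : ℕ → ℝ := fun i => c i * Real.log (ρ i / μ) with hddef
    set e : ℕ → ℝ := fun i => if i ≤ j then -c i else c i with hedef
    have hene : ∀ i, i ≤ n → e i ≠ 0 := by
      intro i hin
      by_cases hij : i ≤ j <;> simp [hedef, hij, hc i hin]
    -- the flipped sequence has at most K sign changes
    have hecard : ((Finset.range n).filter fun i => e i * e (i + 1) < 0).card ≤ K := by
      have hsub : ((Finset.range n).filter fun i => e i * e (i + 1) < 0) ⊆
          ((Finset.range n).filter fun i => c i * c (i + 1) < 0).erase j := by
        intro i hi
        simp only [Finset.mem_filter, Finset.mem_range] at hi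
        obtain ⟨hin, hie⟩ := hi
        rcases lt_trichotomy i j with h | h | h
        · have e1 : e i = -c i := if_pos (by omega)
          have e2 : e (i + 1) = -c (i + 1) := if_pos (by omega)
          rw [e1, e2] at hie
          refine Finset.mem_erase.mpr ⟨by omega, ?_⟩
          simp only [Finset.mem_filter, Finset.mem_range]
          exact ⟨hin, by nlinarith⟩
        · exfalso
          subst h
          have e1 : e i = -c i := if_pos le_rfl
          have e2 : e (i + 1) = c (i + 1) := if_neg (by omega)
          rw [e1, e2] at hie
          nlinarith
        · have e1 : e i = c i := if_neg (by omega)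
          have e2 : e (i + 1) = c (i + 1) := if_neg (by omega)
          rw [e1, e2] at hie
          refine Finset.mem_erase.mpr ⟨by omega, ?_⟩
          simp only [Finset.mem_filter, Finset.mem_range]
          exact ⟨hin, hie⟩
      calc ((Finset.range n).filter fun i => e i * e (i + 1) < 0).card
          ≤ (((Finset.range n).filter fun i => c i * c (i + 1) < 0).erase j).card :=
            Finset.card_le_card hsub
        _ = K := by rw [Finset.card_erase_of_mem hjmem, hcardeq]; omega
    -- where d is nonzero it has the sign of e
    have hde : ∀ i, i ≤ n → d i ≠ 0 → 0 < d i * e i := by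
      intro i hin hdne
      have hcine := hc i hin
      have hlogne : Real.log (ρ i / μ) ≠ 0 := by
        intro h0
        exact hdne (by simp [hddef, h0])
      have hρine : ρ i ≠ μ := by
        intro h0
        exact hlogne (by rw [h0, div_self (ne_of_gt hμpos), Real.log_one])
      by_cases hij : i ≤ j
      · have h1 : ρ i ≤ μ := hmono i (j + 1) (by omega) (by omega)
        have hlt : ρ i < μ := lt_of_le_of_ne h1 hρine
        have hlog : Real.log (ρ i / μ) < 0 :=
          Real.log_neg (by have := hρ i hin; positivity) ((div_lt_one hμpos).mpr hlt)
        have he1 : e i = -c i := by simp [hedef, hij]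
        have hd1 : d i = c i * Real.log (ρ i / μ) := by simp [hddef]
        rw [he1, hd1]
        nlinarith [mul_self_pos.mpr hcine]
      · have h1 : μ ≤ ρ i := hmono (j + 1) i (by omega) hin
        have hlt : μ < ρ i := lt_of_le_of_ne h1 (Ne.symm hρine)
        have hlog : 0 < Real.log (ρ i / μ) :=
          Real.log_pos ((one_lt_div hμpos).mpr hlt)
        have he1 : e i = c i := by simp [hedef, hij]
        have hd1 : d i = c i * Real.log (ρ i / μ) := by simp [hddef]
        rw [he1, hd1]
        nlinarith [mul_self_pos.mpr hcine]
    -- the set of indices where d is nonzero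
    set T := (Finset.range (n + 1)).filter fun i => d i ≠ 0 with hTdef
    have hTne : T.Nonempty := by
      refine ⟨i0, ?_⟩
      simp only [hTdef, Finset.mem_filter, Finset.mem_range]
      refine ⟨by omega, ?_⟩
      have hρ0 : 0 < ρ i0 := hρ i0 hi0n
      have hlogne : Real.log (ρ i0 / μ) ≠ 0 := by
        rcases lt_or_gt_of_ne hi0 with h | h
        · exact ne_of_lt (Real.log_neg (by positivity) ((div_lt_one hμpos).mpr h))
        · exact ne_of_gt (Real.log_pos ((one_lt_div hμpos).mpr h))
      simp [hddef, hc i0 hi0n, hlogne]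
    have hTsub : ∀ i ∈ T, i ≤ n := by
      intro i hi
      have := (Finset.mem_filter.mp hi).1
      simpa [Nat.lt_succ_iff] using this
    have hTd : ∀ i ∈ T, d i ≠ 0 := fun i hi => (Finset.mem_filter.mp hi).2
    have hM : 0 < T.card := Finset.card_pos.mpr hTne
    set φ : Fin T.card ↪o ℕ := T.orderEmbOfFin rfl with hφdef
    have hφmem : ∀ k, φ k ∈ T := fun k => Finset.orderEmbOfFin_mem T rfl k
    -- totalized enumeration
    set ψ : ℕ → ℕ := fun k => if h : k < T.card then φ ⟨k, h⟩ else k + n + 1 with hψdef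
    have hψmem : ∀ k, k < T.card → ψ k ∈ T := by
      intro k hk
      simp only [hψdef, dif_pos hk]
      exact hφmem _
    have hψn : ∀ k, k < T.card → ψ k ≤ n := fun k hk => hTsub _ (hψmem k hk)
    have hψmono : ∀ k l, k < l → l < T.card → ψ k < ψ l := by
      intro k l hkl hl
      simp only [hψdef, dif_pos hl, dif_pos (by omega : k < T.card)]
      exact φ.strictMono (by simp [Fin.mk_lt_mk]; omega)
    -- the new coefficient/base sequences
    set c' : ℕ → ℝ := fun k => if k < T.card then d (ψ k) else 1 with hc'def
    set ρ' : ℕ → ℝ := fun k => if k < T.card then ρ (ψ k) / μ else 1 with hρ'def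
    set n' := T.card - 1 with hn'def
    have hρ'pos : ∀ k, k ≤ n' → 0 < ρ' k := by
      intro k hk
      have hkM : k < T.card := by omega
      simp only [hρ'def, if_pos hkM]
      have := hρ _ (hψn k hkM)
      positivity
    have hρ'mono : ∀ k l, k ≤ l → l ≤ n' → ρ' k ≤ ρ' l := by
      intro k l hkl hl
      have hlM : l < T.card := by omega
      have hkM : k < T.card := by omega
      simp only [hρ'def, if_pos hkM, if_pos hlM]
      have hle : ψ k ≤ ψ l := by
        rcases eq_or_lt_of_le hkl with h | h
        · rw [h]
        · exact le_of_lt (hψmono k l h hlM)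
      gcongr
      exact hmono _ _ hle (hψn l hlM)
    have hc'ne : ∀ k, k ≤ n' → c' k ≠ 0 := by
      intro k hk
      have hkM : k < T.card := by omega
      simp only [hc'def, if_pos hkM]
      exact hTd _ (hψmem k hkM)
    -- sign changes of d at consecutive enumerated points give sign changes of e
    have hwit : ∀ k, k + 1 < T.card → d (ψ k) * d (ψ (k + 1)) < 0 →
        ∃ i, ψ k ≤ i ∧ i < ψ (k + 1) ∧ e i * e (i + 1) < 0 := by
      intro k hk hsgn
      have ha : ψ k ≤ n := hψn k (by omega)
      have hb : ψ (k + 1) ≤ n := hψn (k + 1) hk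
      have hab : ψ k < ψ (k + 1) := hψmono k (k + 1) (by omega) hk
      have h1 : 0 < d (ψ k) * e (ψ k) := hde _ ha (hTd _ (hψmem k (by omega)))
      have h2 : 0 < d (ψ (k + 1)) * e (ψ (k + 1)) := hde _ hb (hTd _ (hψmem (k + 1) hk))
      have hesgn : e (ψ k) * e (ψ (k + 1)) < 0 := by nlinarith
      exact signChain e (ψ (k + 1)) (ψ k) hab (fun i hi => hene i (by omega)) hesgn
    have hcount : ((Finset.range n').filter fun k => c' k * c' (k + 1) < 0).card ≤ K := by
      refine le_trans ?_ hecard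
      classical
      set f : ℕ → ℕ := fun k =>
        if h : k + 1 < T.card ∧ d (ψ k) * d (ψ (k + 1)) < 0 then (hwit k h.1 h.2).choose
        else 0 with hfdef
      have hfspec : ∀ k, k + 1 < T.card → d (ψ k) * d (ψ (k + 1)) < 0 →
          ψ k ≤ f k ∧ f k < ψ (k + 1) ∧ e (f k) * e (f k + 1) < 0 := by
        intro k h1 h2
        have : f k = (hwit k h1 h2).choose := by simp [hfdef, h1, h2]
        rw [this]
        exact (hwit k h1 h2).choose_spec
      have hmemf : ∀ k ∈ (Finset.range n').filter fun k => c' k * c' (k + 1) < 0,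
          k + 1 < T.card ∧ d (ψ k) * d (ψ (k + 1)) < 0 := by
        intro k hk
        simp only [Finset.mem_filter, Finset.mem_range] at hk
        obtain ⟨hkn, hksgn⟩ := hk
        have h1 : k + 1 < T.card := by omega
        have e1 : c' k = d (ψ k) := if_pos (by omega)
        have e2 : c' (k + 1) = d (ψ (k + 1)) := if_pos h1
        rw [e1, e2] at hksgn
        exact ⟨h1, hksgn⟩
      apply Finset.card_le_card_of_injOn f
      · intro k hk
        obtain ⟨h1, h2⟩ := hmemf k hk
        obtain ⟨hs1, hs2, hs3⟩ := hfspec k h1 h2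
        simp only [Finset.mem_coe, Finset.mem_filter, Finset.mem_range]
        have : ψ (k + 1) ≤ n := hψn (k + 1) h1
        exact ⟨by omega, hs3⟩
      · intro k hk l hl hkl
        by_contra hne
        have key : ∀ a b, a ∈ ((Finset.range n').filter fun k => c' k * c' (k + 1) < 0) →
            b ∈ ((Finset.range n').filter fun k => c' k * c' (k + 1) < 0) → a < b → f a < f b := by
          intro a b ha hb hab
          obtain ⟨ha1, ha2⟩ := hmemf a ha
          obtain ⟨hb1, hb2⟩ := hmemf b hb
          obtain ⟨hsa1, hsa2, _⟩ := hfspec a ha1 ha2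
          obtain ⟨hsb1, hsb2, _⟩ := hfspec b hb1 hb2
          have : ψ (a + 1) ≤ ψ b := by
            rcases eq_or_lt_of_le (by omega : a + 1 ≤ b) with h | h
            · rw [h]
            · exact le_of_lt (hψmono _ _ h (by omega))
          omega
        rcases lt_or_gt_of_ne hne with h | h
        · exact absurd hkl (ne_of_lt (key _ _ hk hl h))
        · exact absurd hkl.symm (ne_of_lt (key _ _ hl hk h))
    -- the normalized exponential sum and its derivative
    set G : ℝ → ℝ := fun s => ∑ q ∈ Finset.range (n + 1), c q * (ρ q / μ) ^ s with hGdef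
    set G1 : ℝ → ℝ := fun s => ∑ q ∈ Finset.range (n + 1), d q * (ρ q / μ) ^ s with hG1def
    have hψinj : ∀ a b, a < T.card → b < T.card → ψ a = ψ b → a = b := by
      intro a b ha hb hab
      by_contra hne
      rcases lt_or_gt_of_ne hne with h | h
      · exact absurd hab (ne_of_lt (hψmono a b h hb))
      · exact absurd hab.symm (ne_of_lt (hψmono b a h ha))
    have hG1sum : ∀ s : ℝ, G1 s = ∑ q ∈ Finset.range (n' + 1), c' q * ρ' q ^ s := by
      intro s
      have himg : (Finset.range T.card).image ψ = T := by
        apply Finset.eq_of_subset_of_card_le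
        · intro i hi
          obtain ⟨k, hk, rfl⟩ := Finset.mem_image.mp hi
          exact hψmem k (Finset.mem_range.mp hk)
        · rw [Finset.card_image_of_injOn (fun a ha b hb hab =>
            hψinj a b (Finset.mem_range.mp ha) (Finset.mem_range.mp hb) hab)]
          simp
      have hTsubset : T ⊆ Finset.range (n + 1) := Finset.filter_subset _ _
      have hvanish : ∀ q ∈ Finset.range (n + 1), q ∉ T → d q * (ρ q / μ) ^ s = 0 := by
        intro q hq hqT
        have : ¬ d q ≠ 0 := by
          intro hdq
          exact hqT (Finset.mem_filter.mpr ⟨hq, hdq⟩)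
        push_neg at this
        rw [this, zero_mul]
      rw [hG1def]
      simp only
      calc ∑ q ∈ Finset.range (n + 1), d q * (ρ q / μ) ^ s
          = ∑ q ∈ T, d q * (ρ q / μ) ^ s := (Finset.sum_subset hTsubset hvanish).symm
        _ = ∑ q ∈ (Finset.range T.card).image ψ, d q * (ρ q / μ) ^ s := by rw [himg]
        _ = ∑ k ∈ Finset.range T.card, d (ψ k) * (ρ (ψ k) / μ) ^ s :=
            Finset.sum_image (fun a ha b hb hab =>
              hψinj a b (Finset.mem_range.mp ha) (Finset.mem_range.mp hb) hab)
        _ = ∑ k ∈ Finset.range (n' + 1), c' k * ρ' k ^ s := by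
            have hM1 : n' + 1 = T.card := by omega
            rw [hM1]
            refine Finset.sum_congr rfl fun k hk => ?_
            have hkM : k < T.card := Finset.mem_range.mp hk
            simp only [hc'def, hρ'def, if_pos hkM]
    have hG' : ∀ s : ℝ, HasDerivAt G (G1 s) s := by
      intro s
      have h1 : HasDerivAt (fun y : ℝ => ∑ q ∈ Finset.range (n + 1), c q * (ρ q / μ) ^ y)
          (∑ q ∈ Finset.range (n + 1), c q * ((ρ q / μ) ^ s * Real.log (ρ q / μ))) s := by
        apply HasDerivAt.fun_sum
        intro q hq
        have hq' : q ≤ n := by simpa [Nat.lt_succ_iff] using hq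
        have hpos : 0 < ρ q / μ := by have := hρ q hq'; positivity
        exact ((Real.hasStrictDerivAt_const_rpow hpos s).hasDerivAt).const_mul (c q)
      rw [hGdef, hG1def]
      convert h1 using 1
      refine Finset.sum_congr rfl fun q hq => ?_
      simp only [hddef]
      ring
    have hGc : Continuous G := by
      have : Differentiable ℝ G := fun x => (hG' x).differentiableAt
      exact this.continuous
    have hGE : ∀ s : ℝ, G s * μ ^ s = ∑ q ∈ Finset.range (n + 1), c q * ρ q ^ s := by
      intro s
      rw [hGdef]
      simp only
      rw [Finset.sum_mul]
      refine Finset.sum_congr rfl fun q hq => ?_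
      have hq' : q ≤ n := by simpa [Nat.lt_succ_iff] using hq
      have h0 : (0:ℝ) ≤ ρ q := le_of_lt (hρ q hq')
      rw [Real.div_rpow h0 (le_of_lt hμpos)]
      have hμs : (0:ℝ) < μ ^ s := Real.rpow_pos_of_pos hμpos s
      field_simp
    have hGalt : ∀ i, i < m → G (t i) * G (t (i + 1)) < 0 := by
      intro i hi
      have h := halt i hi
      rw [← hGE (t i), ← hGE (t (i + 1))] at h
      have p1 := Real.rpow_pos_of_pos hμpos (t i)
      have p2 := Real.rpow_pos_of_pos hμpos (t (i + 1))
      nlinarith [mul_pos p1 p2]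
    -- if m = 0, done; otherwise construct sign changes of the derivative
    rcases Nat.eq_zero_or_pos m with hm0 | hm0
    · omega
    obtain ⟨m', rfl⟩ : ∃ m', m = m' + 1 := ⟨m - 1, by omega⟩
    -- zeros of G between alternation points
    have hzex : ∀ i, i < m' + 1 → ∃ zz, t i < zz ∧ zz < t (i + 1) ∧ G zz = 0 := by
      intro i hi
      have h := hGalt i hi
      have hti : t i < t (i + 1) := ht i hi
      rcases lt_trichotomy (G (t i)) 0 with hneg | hzero | hpos
      · have hpos' : 0 < G (t (i + 1)) := by nlinarith
        obtain ⟨zz, hz, hz0⟩ := intermediate_value_Ioo (le_of_lt hti) hGc.continuousOn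
          (Set.mem_Ioo.mpr ⟨hneg, hpos'⟩)
        exact ⟨zz, hz.1, hz.2, hz0⟩
      · rw [hzero, zero_mul] at h
        exact absurd h (lt_irrefl 0)
      · have hneg' : G (t (i + 1)) < 0 := by nlinarith
        obtain ⟨zz, hz, hz0⟩ := intermediate_value_Ioo' (le_of_lt hti) hGc.continuousOn
          (Set.mem_Ioo.mpr ⟨hneg', hpos⟩)
        exact ⟨zz, hz.1, hz.2, hz0⟩
    classical
    set z : ℕ → ℝ := fun i => if h : i < m' + 1 then (hzex i h).choose else 0 with hzdef
    have hzspec : ∀ i, i < m' + 1 → t i < z i ∧ z i < t (i + 1) ∧ G (z i) = 0 := by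
      intro i hi
      have hzi : z i = (hzex i hi).choose := by rw [hzdef]; exact dif_pos hi
      rw [hzi]
      exact (hzex i hi).choose_spec
    -- mean value points after each alternation point
    have hvex : ∀ i, i + 1 < m' + 1 → ∃ vv, t (i + 1) < vv ∧ vv < z (i + 1) ∧
        G1 vv = (0 - G (t (i + 1))) / (z (i + 1) - t (i + 1)) := by
      intro i hi
      obtain ⟨h1, h2, h3⟩ := hzspec (i + 1) hi
      obtain ⟨vv, hv, hveq⟩ := exists_hasDerivAt_eq_slope G G1 h1 hGc.continuousOn
        (fun x _ => hG' x)
      rw [h3] at hveq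
      exact ⟨vv, hv.1, hv.2, hveq⟩
    set v : ℕ → ℝ := fun i => if h : i + 1 < m' + 1 then (hvex i h).choose else 0 with hvdef
    have hvspec : ∀ i, i + 1 < m' + 1 → t (i + 1) < v i ∧ v i < z (i + 1) ∧
        G1 (v i) = (0 - G (t (i + 1))) / (z (i + 1) - t (i + 1)) := by
      intro i hi
      have hvi : v i = (hvex i hi).choose := by rw [hvdef]; exact dif_pos hi
      rw [hvi]
      exact (hvex i hi).choose_spec
    -- the mean value point before the first alternation point
    have hu0ex : ∃ uu, z 0 < uu ∧ uu < t 1 ∧ G1 uu = (G (t 1) - 0) / (t 1 - z 0) := by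
      obtain ⟨h1, h2, h3⟩ := hzspec 0 (by omega)
      obtain ⟨uu, hu, hueq⟩ := exists_hasDerivAt_eq_slope G G1 h2 hGc.continuousOn
        (fun x _ => hG' x)
      rw [h3] at hueq
      exact ⟨uu, hu.1, hu.2, hueq⟩
    obtain ⟨u0, hu01, hu02, hu03⟩ := hu0ex
    have hGtne : ∀ i, i < m' + 1 → G (t (i + 1)) ≠ 0 := by
      intro i hi h0
      have h := hGalt i hi
      rw [h0, mul_zero] at h
      exact absurd h (lt_irrefl 0)
    set t' : ℕ → ℝ := fun k => if k = 0 then u0 else v (k - 1) with ht'def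
    have ht'0 : t' 0 = u0 := by simp [ht'def]
    have ht'succ : ∀ l, t' (l + 1) = v l := by
      intro l
      simp [ht'def]
    have ht'mono : ∀ k, k < m' → t' k < t' (k + 1) := by
      intro k hk
      cases k with
      | zero =>
        rw [ht'0, ht'succ 0]
        have := (hvspec 0 (by omega)).1
        linarith
      | succ l =>
        rw [ht'succ l, ht'succ (l + 1)]
        have hv1 := (hvspec l (by omega)).2.1
        have hz1 := (hzspec (l + 1) (by omega)).2.1
        have hv2 := (hvspec (l + 1) (by omega)).1
        linarith
    have ht'alt : ∀ k, k < m' → G1 (t' k) * G1 (t' (k + 1)) < 0 := by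
      intro k hk
      cases k with
      | zero =>
        rw [ht'0, ht'succ 0, hu03, (hvspec 0 (by omega)).2.2]
        have hP : (0:ℝ) < t 1 - z 0 := by linarith [(hzspec 0 (by omega)).2.1]
        have hQ : (0:ℝ) < z 1 - t 1 := by linarith [(hzspec 1 (by omega)).1]
        have hane : G (t 1) ≠ 0 := hGtne 0 (by omega)
        have heq : (G (t 1) - 0) / (t 1 - z 0) * ((0 - G (t 1)) / (z 1 - t 1))
            = -(G (t 1) * G (t 1)) / ((t 1 - z 0) * (z 1 - t 1)) := by
          field_simp
          ring
        rw [heq]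
        exact div_neg_of_neg_of_pos (by nlinarith [mul_self_pos.mpr hane]) (mul_pos hP hQ)
      | succ l =>
        rw [ht'succ l, ht'succ (l + 1), (hvspec l (by omega)).2.2, (hvspec (l + 1) (by omega)).2.2]
        have hP : (0:ℝ) < z (l + 1) - t (l + 1) := by
          linarith [(hzspec (l + 1) (by omega)).1]
        have hQ : (0:ℝ) < z (l + 2) - t (l + 2) := by
          linarith [(hzspec (l + 2) (by omega)).1]
        have hab : G (t (l + 1)) * G (t (l + 2)) < 0 := hGalt (l + 1) (by omega)
        have heq : (0 - G (t (l + 1))) / (z (l + 1) - t (l + 1)) *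
              ((0 - G (t (l + 2))) / (z (l + 2) - t (l + 2)))
            = G (t (l + 1)) * G (t (l + 2)) / ((z (l + 1) - t (l + 1)) * (z (l + 2) - t (l + 2))) := by
          field_simp
          ring
        rw [heq]
        exact div_neg_of_neg_of_pos hab (mul_pos hP hQ)
    have hfinal : m' ≤ K := by
      apply ih n' ρ' c' hρ'pos hρ'mono hc'ne hcount m' t' ht'mono
      intro k hk
      rw [← hG1sum, ← hG1sum]
      exact ht'alt k hk
    omega





set_option maxHeartbeats 2000000 in
/-- Descartes' lemma for exponential sums: if the coefficient sequence has `K`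
sign changes then `E(s) = ∑ cᵢ rᵢ^s` changes sign at most `K` times on `ℝ`. -/
theorem stmt1 (n K : ℕ) (r c : Fin (n + 1) → ℝ)
    (hr0 : ∀ i, 0 < r i) (hr1 : ∀ i, r i < 1) (hmono : Monotone r)
    (hc : ∀ i, c i ≠ 0)
    (hK : K = (Finset.univ.filter fun i : Fin n =>
        c i.castSucc * c i.succ < 0).card)
    (E : ℝ → ℝ) (hE : ∀ s, E s = ∑ i, c i * r i ^ s)
    (m : ℕ) (t : Fin (m + 1) → ℝ) (ht : StrictMono t)
    (halt : ∀ i : Fin m, E (t i.castSucc) * E (t i.succ) < 0) :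
    m ≤ K := by
  classical
  set cN : ℕ → ℝ := fun q => c ⟨min q n, by omega⟩ with hcN
  set rN : ℕ → ℝ := fun q => r ⟨min q n, by omega⟩ with hrN
  set tN : ℕ → ℝ := fun q => t ⟨min q m, by omega⟩ with htN
  have hsum : ∀ s : ℝ, ∑ q ∈ Finset.range (n + 1), cN q * rN q ^ s = E s := by
    intro s
    rw [hE, ← Fin.sum_univ_eq_sum_range (fun q => cN q * rN q ^ s) (n + 1)]
    refine Finset.sum_congr rfl fun i _ => ?_
    have h1 : (⟨min (i : ℕ) n, by omega⟩ : Fin (n + 1)) = i := by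
      ext
      simp [Nat.min_eq_left (Nat.lt_succ_iff.mp i.isLt)]
    simp only [hcN, hrN, h1]
  refine descartes_aux K n rN cN ?_ ?_ ?_ ?_ m tN ?_ ?_
  · intro i _
    exact hr0 _
  · intro i j hij _
    exact hmono (by simp only [Fin.mk_le_mk]; omega)
  · intro i _
    exact hc _
  · have hcards : ((Finset.range n).filter fun i => cN i * cN (i + 1) < 0).card
        = (Finset.univ.filter fun i : Fin n => c i.castSucc * c i.succ < 0).card := by
      rw [Finset.card_filter, Finset.card_filter,
        ← Fin.sum_univ_eq_sum_range (fun q => if cN q * cN (q + 1) < 0 then 1 else 0) n]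
      refine Finset.sum_congr rfl fun i _ => ?_
      have h1 : (⟨min (i : ℕ) n, by omega⟩ : Fin (n + 1)) = i.castSucc := by
        ext
        simp [Nat.min_eq_left (le_of_lt i.isLt)]
      have h2 : (⟨min ((i : ℕ) + 1) n, by omega⟩ : Fin (n + 1)) = i.succ := by
        ext
        simp [Nat.min_eq_left (Nat.succ_le_of_lt i.isLt)]
      simp only [hcN, h1, h2]
    rw [hcards, hK]
  · intro i hi
    have h : (⟨min i m, by omega⟩ : Fin (m + 1)) < ⟨min (i + 1) m, by omega⟩ := by
      simp only [Fin.mk_lt_mk]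
      omega
    have e1 : tN i = t ⟨min i m, by omega⟩ := rfl
    have e2 : tN (i + 1) = t ⟨min (i + 1) m, by omega⟩ := rfl
    rw [e1, e2]
    exact ht h
  · intro i hi
    rw [hsum (tN i), hsum (tN (i + 1))]
    have e1 : tN i = t ⟨min i m, by omega⟩ := rfl
    have e2 : tN (i + 1) = t ⟨min (i + 1) m, by omega⟩ := rfl
    rw [e1, e2]
    have h := halt ⟨i, hi⟩
    have h1 : (⟨i, hi⟩ : Fin m).castSucc = (⟨min i m, by omega⟩ : Fin (m + 1)) := by
      ext
      simp [Nat.min_eq_left (le_of_lt hi)]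
    have h2 : (⟨i, hi⟩ : Fin m).succ = (⟨min (i + 1) m, by omega⟩ : Fin (m + 1)) := by
      ext
      simp [Nat.min_eq_left (Nat.succ_le_of_lt hi)]
    rw [h1, h2] at h
    exact h
end

section
/- Let P = Σ_I c_I X^I be a multivariable real polynomial in n variables. Suppose that for every multi-index J the partial sum P_J = Σ_{I ⪯ J} c_I (sum over multi-indices I with I_i ≤ J_i for all i) is nonnegative, and the total sum of all coefficients is positive. Then P(x) > 0 for all x ∈ (0,1]^n. -/
open Finset

/-- Weak positive dominance: if every partial sum of coefficients (over
multi-indices `I ⪯ J`) is nonnegative and the total sum is positive, then the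
polynomial is positive on `(0,1]^n`. -/
theorem stmt2 (n : ℕ) (c : (Fin n → ℕ) →₀ ℝ)
    (hWPD : ∀ J : Fin n → ℕ,
      0 ≤ ∑ I ∈ c.support.filter (fun I => ∀ i, I i ≤ J i), c I)
    (htot : 0 < ∑ I ∈ c.support, c I)
    (x : Fin n → ℝ) (hx : ∀ i, 0 < x i ∧ x i ≤ 1) :
    0 < ∑ I ∈ c.support, c I * ∏ i, x i ^ I i := by
  classical
  set M : ℕ := c.support.sup (fun I => Finset.univ.sup I) with hM
  have hsup : ∀ I ∈ c.support, ∀ i, I i ≤ M := fun I hI i =>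
    le_trans (Finset.le_sup (Finset.mem_univ i)) (Finset.le_sup hI)
  set w : Fin n → ℕ → ℝ := fun i j => if j < M then x i ^ j - x i ^ (j+1) else x i ^ j with hw
  have hw0 : ∀ i j, 0 ≤ w i j := by
    intro i j
    obtain ⟨hx0, hx1⟩ := hx i
    by_cases h : j < M
    · simp only [hw, if_pos h, sub_nonneg]
      exact pow_le_pow_of_le_one hx0.le hx1 (Nat.le_succ j)
    · simp only [hw, if_neg h]
      positivity
  have tele : ∀ i k, k ≤ M → ∑ j ∈ Finset.Ico k (M+1), w i j = x i ^ k := by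
    intro i k hk
    rw [Finset.sum_Ico_succ_top hk]
    have h1 : ∀ j ∈ Finset.Ico k M, w i j = x i ^ j - x i ^ (j+1) := by
      intro j hj; simp [hw, (Finset.mem_Ico.mp hj).2]
    rw [Finset.sum_congr rfl h1, Finset.sum_Ico_eq_sub _ hk,
      Finset.sum_range_sub' (fun j => x i ^ j), Finset.sum_range_sub' (fun j => x i ^ j)]
    simp only [hw, lt_irrefl, if_neg (lt_irrefl M)]
    ring
  have prod_eq : ∀ I ∈ c.support, (∏ i, x i ^ I i)
      = ∑ J ∈ Fintype.piFinset (fun i => Finset.Ico (I i) (M+1)), ∏ i, w i (J i) := by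
    intro I hI
    rw [← Finset.prod_univ_sum]
    exact Finset.prod_congr rfl fun i _ => (tele i (I i) (hsup I hI i)).symm
  set Box : Finset (Fin n → ℕ) := Fintype.piFinset (fun _ : Fin n => Finset.range (M+1))
    with hBox
  have hset : ∀ I : Fin n → ℕ, (∀ i, I i ≤ M) →
      Fintype.piFinset (fun i => Finset.Ico (I i) (M+1))
        = Box.filter (fun J => ∀ i, I i ≤ J i) := by
    intro I hIM
    ext J
    simp only [Fintype.mem_piFinset, Finset.mem_Ico, hBox, Finset.mem_filter,
      Finset.mem_range]
    constructor
    · intro h; exact ⟨fun i => (h i).2, fun i => (h i).1⟩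
    · intro h i; exact ⟨h.2 i, h.1 i⟩
  have key : ∑ I ∈ c.support, c I * ∏ i, x i ^ I i
      = ∑ J ∈ Box, (∑ I ∈ c.support.filter (fun I => ∀ i, I i ≤ J i), c I)
          * ∏ i, w i (J i) := by
    calc ∑ I ∈ c.support, c I * ∏ i, x i ^ I i
        = ∑ I ∈ c.support, ∑ J ∈ Box,
            (if ∀ i, I i ≤ J i then c I * ∏ i, w i (J i) else 0) := by
          refine Finset.sum_congr rfl fun I hI => ?_
          rw [prod_eq I hI, hset I (hsup I hI), Finset.mul_sum, ← Finset.sum_filter]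
      _ = ∑ J ∈ Box, ∑ I ∈ c.support,
            (if ∀ i, I i ≤ J i then c I * ∏ i, w i (J i) else 0) := Finset.sum_comm
      _ = ∑ J ∈ Box, (∑ I ∈ c.support.filter (fun I => ∀ i, I i ≤ J i), c I)
            * ∏ i, w i (J i) := by
          refine Finset.sum_congr rfl fun J _ => ?_
          rw [← Finset.sum_filter, Finset.sum_mul]
  rw [key]
  apply Finset.sum_pos'
  · intro J _
    exact mul_nonneg (hWPD J) (Finset.prod_nonneg fun i _ => hw0 i (J i))
  · refine ⟨fun _ => M, ?_, ?_⟩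
    · simp [hBox, Fintype.mem_piFinset, Nat.lt_succ_self]
    · have hfilt : c.support.filter (fun I => ∀ i, I i ≤ M) = c.support :=
        Finset.filter_true_of_mem (fun I hI => hsup I hI)
      rw [hfilt]
      have hwpos : ∀ i, 0 < w i M := by
        intro i
        simp only [hw, if_neg (lt_irrefl M)]
        exact pow_pos (hx i).1 M
      exact mul_pos htot (Finset.prod_pos fun i _ => hwpos i)
end

section
/- Let P = Σ_I c_I X^I be a multivariable real polynomial in n variables. If for every multi-index J the partial sum P_J = Σ_{I ⪯ J} c_I is strictly positive, then P(x) > 0 for all x ∈ [0,1]^n. -/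
/-- Positive dominance: if every partial sum of coefficients (over multi-indices
`I ⪯ J`) is strictly positive, then the polynomial is positive on `[0,1]^n`. -/
theorem stmt3 (n : ℕ) (c : (Fin n → ℕ) →₀ ℝ)
    (hPD : ∀ J : Fin n → ℕ,
      0 < ∑ I ∈ c.support.filter (fun I => ∀ i, I i ≤ J i), c I)
    (x : Fin n → ℝ) (hx : ∀ i, 0 ≤ x i ∧ x i ≤ 1) :
    0 < ∑ I ∈ c.support, c I * ∏ i, x i ^ I i := by
  classical
  set N := c.support.sup (fun I => Finset.univ.sup I) with hNdef
  have hsupp : ∀ I ∈ c.support, ∀ i, I i ≤ N := fun I hI i =>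
    le_trans (Finset.le_sup (Finset.mem_univ i)) (Finset.le_sup hI)
  set w : Fin n → ℕ → ℝ := fun i m => if m = N then x i ^ N else x i ^ m - x i ^ (m+1)
    with hwdef
  have hw0 : ∀ i m, 0 ≤ w i m := by
    intro i m
    by_cases h : m = N
    · simp only [hwdef, h, if_pos rfl]
      exact pow_nonneg (hx i).1 _
    · simp only [hwdef, if_neg h, sub_nonneg]
      exact pow_le_pow_of_le_one (hx i).1 (hx i).2 (Nat.le_succ m)
  have hwsum : ∀ i k, k ≤ N → ∑ m ∈ Finset.Ico k (N+1), w i m = x i ^ k := by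
    intro i k hk
    rw [Finset.sum_Ico_succ_top hk]
    have htel : ∑ m ∈ Finset.Ico k N, w i m = x i ^ k - x i ^ N := by
      have hcongr : ∀ m ∈ Finset.Ico k N, w i m = x i ^ m - x i ^ (m+1) := by
        intro m hm
        rw [Finset.mem_Ico] at hm
        simp [hwdef, Nat.ne_of_lt hm.2]
      rw [Finset.sum_congr rfl hcongr, Finset.sum_Ico_eq_sub _ hk,
        Finset.sum_range_sub' (fun m => x i ^ m), Finset.sum_range_sub' (fun m => x i ^ m)]
      ring
    rw [htel]
    simp [hwdef]
  have hprod : ∀ I ∈ c.support,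
      ∏ i, x i ^ I i =
      ∑ J ∈ Fintype.piFinset (fun _ : Fin n => Finset.range (N+1)),
        (if ∀ i, I i ≤ J i then ∏ i, w i (J i) else 0) := by
    intro I hI
    have h1 : ∏ i, x i ^ I i = ∏ i, ∑ m ∈ Finset.Ico (I i) (N+1), w i m :=
      Finset.prod_congr rfl (fun i _ => (hwsum i (I i) (hsupp I hI i)).symm)
    rw [h1, Finset.prod_univ_sum, ← Finset.sum_filter]
    apply Finset.sum_congr
    · ext J
      simp only [Fintype.mem_piFinset, Finset.mem_Ico, Finset.mem_range, Finset.mem_filter,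
        forall_and]
      tauto
    · intros; rfl
  have key : ∑ I ∈ c.support, c I * ∏ i, x i ^ I i
      = ∑ J ∈ Fintype.piFinset (fun _ : Fin n => Finset.range (N+1)),
          (∑ I ∈ c.support.filter (fun I => ∀ i, I i ≤ J i), c I) * ∏ i, w i (J i) := by
    rw [Finset.sum_congr rfl (fun I hI => by rw [hprod I hI, Finset.mul_sum])]
    rw [Finset.sum_comm]
    apply Finset.sum_congr rfl
    intro J _
    rw [Finset.sum_mul, Finset.sum_filter]
    apply Finset.sum_congr rfl
    intro I _
    by_cases h : ∀ i, I i ≤ J i <;> simp [h]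
  rw [key]
  have hwprod : ∀ J : Fin n → ℕ, 0 ≤ ∏ i, w i (J i) :=
    fun J => Finset.prod_nonneg (fun i _ => hw0 i (J i))
  have htotal : ∑ J ∈ Fintype.piFinset (fun _ : Fin n => Finset.range (N+1)),
      ∏ i, w i (J i) = 1 := by
    rw [← Finset.prod_univ_sum]
    have h1 : ∀ i : Fin n, ∑ m ∈ Finset.range (N+1), w i m = 1 := by
      intro i
      rw [Finset.range_eq_Ico, hwsum i 0 (Nat.zero_le N), pow_zero]
    rw [Finset.prod_congr rfl (fun i _ => h1 i)]
    exact Finset.prod_const_one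
  have hex : ∃ J ∈ Fintype.piFinset (fun _ : Fin n => Finset.range (N+1)),
      0 < ∏ i, w i (J i) := by
    by_contra h
    push_neg at h
    have hle : ∑ J ∈ Fintype.piFinset (fun _ : Fin n => Finset.range (N+1)),
        ∏ i, w i (J i) ≤ 0 := Finset.sum_nonpos (fun J hJ => h J hJ)
    linarith
  obtain ⟨J0, hJ0, hJ0pos⟩ := hex
  apply Finset.sum_pos'
  · intro J _
    exact mul_nonneg (le_of_lt (hPD J)) (hwprod J)
  · exact ⟨J0, hJ0, mul_pos (hPD J0) hJ0pos⟩
end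

section
/- For all real a, x ∈ [0,1] and every integer k ≥ 2, (a·x^k + 1 − a) − (a·x + 1 − a)^k ≤ (1/8)·k·(k−1)·(1−x)². -/
lemma pow_sub_pow_le_aux (x y : ℝ) (hx : 0 ≤ x) (hxy : x ≤ y) (hy : y ≤ 1) :
    ∀ k : ℕ, y ^ k - x ^ k ≤ k * (y - x) := by
  intro k
  induction k with
  | zero => simp
  | succ n ih =>
    have hy0 : 0 ≤ y := le_trans hx hxy
    have hxn : 0 ≤ x ^ n := pow_nonneg hx n
    have hxn1 : x ^ n ≤ 1 := pow_le_one₀ hx (le_trans hxy hy)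
    have hyn : y ^ n - x ^ n ≥ 0 := by
      have := pow_le_pow_left₀ hx hxy n
      linarith
    push_cast
    calc y ^ (n + 1) - x ^ (n + 1)
        = y * (y ^ n - x ^ n) + x ^ n * (y - x) := by ring
      _ ≤ 1 * (y ^ n - x ^ n) + 1 * (y - x) := by
          apply add_le_add
          · exact mul_le_mul_of_nonneg_right hy hyn
          · exact mul_le_mul_of_nonneg_right hxn1 (by linarith)
      _ ≤ (n + 1) * (y - x) := by nlinarith [ih]

theorem stmt4 (a x : ℝ) (ha : a ∈ Set.Icc (0:ℝ) 1) (hx : x ∈ Set.Icc (0:ℝ) 1)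
    (k : ℕ) (hk : 2 ≤ k) :
    (a * x ^ k + 1 - a) - (a * x + 1 - a) ^ k ≤
      (1 / 8) * (k : ℝ) * ((k : ℝ) - 1) * (1 - x) ^ 2 := by
  obtain ⟨ha0, ha1⟩ := ha
  obtain ⟨hx0, hx1⟩ := hx
  induction k, hk using Nat.le_induction with
  | base =>
    push_cast
    nlinarith [sq_nonneg ((2*a - 1) * (1 - x)), sq_nonneg (1 - x), mul_nonneg (mul_nonneg ha0 (by linarith : (0:ℝ) ≤ 1 - a)) (sq_nonneg (1 - x))]
  | succ n hn ih =>
    set y : ℝ := a * x + 1 - a with hy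
    have hxy : x ≤ y := by nlinarith
    have hy1 : y ≤ 1 := by nlinarith
    have hkey : y ^ n - x ^ n ≤ n * (y - x) :=
      pow_sub_pow_le_aux x y hx0 hxy hy1 n
    have hyx : y - x = (1 - a) * (1 - x) := by rw [hy]; ring
    have hstep : a * (1 - x) * (y ^ n - x ^ n) ≤ (n : ℝ) / 4 * (1 - x) ^ 2 := by
      have h1 : a * (1 - x) * (y ^ n - x ^ n) ≤ a * (1 - x) * (n * ((1 - a) * (1 - x))) := by
        apply mul_le_mul_of_nonneg_left _ (mul_nonneg ha0 (by linarith))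
        rw [← hyx]; exact hkey
      have h2 : a * (1 - a) ≤ 1 / 4 := by nlinarith [sq_nonneg (2 * a - 1)]
      have hn0 : (0 : ℝ) ≤ n := Nat.cast_nonneg n
      have h3 : a * (1 - x) * ((n : ℝ) * ((1 - a) * (1 - x)))
          = (n : ℝ) * (a * (1 - a)) * (1 - x) ^ 2 := by ring
      have h4 : (n : ℝ) * (a * (1 - a)) * (1 - x) ^ 2 ≤ (n : ℝ) * (1 / 4) * (1 - x) ^ 2 :=
        mul_le_mul_of_nonneg_right (mul_le_mul_of_nonneg_left h2 hn0) (sq_nonneg _)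
      rw [h3] at h1
      linarith
    push_cast
    have expand : (a * x ^ (n + 1) + 1 - a) - y ^ (n + 1)
        = ((a * x ^ n + 1 - a) - y ^ n) + a * x ^ n * (x - 1) - y ^ n * (y - 1) := by
      ring
    have hy1' : y - 1 = -(a * (1 - x)) := by rw [hy]; ring
    have expand2 : (a * x ^ (n + 1) + 1 - a) - y ^ (n + 1)
        = ((a * x ^ n + 1 - a) - y ^ n) + a * (1 - x) * (y ^ n - x ^ n) := by
      rw [expand, hy1']; ring
    rw [expand2]
    have : (1 / 8) * ((n : ℝ) + 1) * ((n : ℝ) + 1 - 1) * (1 - x) ^ 2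
        = (1 / 8) * (n : ℝ) * ((n : ℝ) - 1) * (1 - x) ^ 2 + (n : ℝ) / 4 * (1 - x) ^ 2 := by
      ring
    rw [this]
    exact add_le_add ih hstep
end

section
/- Let k ≥ 1 be an integer, M ≥ 2, 0 ≤ x₁ ≤ x₂ ≤ ... ≤ x_M real numbers, and λ₁,...,λ_M ≥ 0 with Σᵢ λᵢ = 1. Then 0 ≤ Σᵢ λᵢ xᵢ^k − (Σᵢ λᵢ xᵢ)^k ≤ (1/8)·k·(k−1)·x_M^{k−2}·(x_M − x₁)². -/
open Finset

private lemma gs_identity (k : ℕ) (a b t : ℝ) :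
    (b - t) * a ^ k + (t - a) * b ^ k - (b - a) * t ^ k =
      (b - t) * (t - a) * (∑ i ∈ range k, (b ^ i - a ^ i) * t ^ (k - 1 - i)) := by
  have hb : (∑ i ∈ range k, b ^ i * t ^ (k - 1 - i)) * (b - t) = b ^ k - t ^ k :=
    geom_sum₂_mul b t k
  have ha : (∑ i ∈ range k, a ^ i * t ^ (k - 1 - i)) * (a - t) = a ^ k - t ^ k :=
    geom_sum₂_mul a t k
  have hsplit : ∑ i ∈ range k, (b ^ i - a ^ i) * t ^ (k - 1 - i) =
      (∑ i ∈ range k, b ^ i * t ^ (k - 1 - i)) - ∑ i ∈ range k, a ^ i * t ^ (k - 1 - i) := by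
    rw [← Finset.sum_sub_distrib]
    exact Finset.sum_congr rfl fun i _ => by ring
  rw [hsplit]
  linear_combination (t - b) * ha + (a - t) * hb

private lemma gs_nonneg (k : ℕ) {a b t : ℝ} (ha : 0 ≤ a) (h1 : a ≤ t) (h2 : t ≤ b) :
    0 ≤ ∑ i ∈ range k, (b ^ i - a ^ i) * t ^ (k - 1 - i) := by
  apply Finset.sum_nonneg
  intro i _
  have ht : 0 ≤ t := le_trans ha h1
  have : a ^ i ≤ b ^ i := pow_le_pow_left₀ ha (le_trans h1 h2) i
  exact mul_nonneg (by linarith) (pow_nonneg ht _)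

private lemma chord (k : ℕ) {a b t : ℝ} (ha : 0 ≤ a) (h1 : a ≤ t) (h2 : t ≤ b) :
    (b - a) * t ^ k ≤ (b - t) * a ^ k + (t - a) * b ^ k := by
  have h := gs_identity k a b t
  nlinarith [gs_nonneg k ha h1 h2, mul_nonneg (sub_nonneg.2 h2) (sub_nonneg.2 h1),
    mul_nonneg (mul_nonneg (sub_nonneg.2 h2) (sub_nonneg.2 h1)) (gs_nonneg k ha h1 h2)]

private lemma gs_bound (k : ℕ) (hk : 1 ≤ k) {a b t : ℝ} (ha : 0 ≤ a) (h1 : a ≤ t)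
    (h2 : t ≤ b) :
    (∑ i ∈ range k, (b ^ i - a ^ i) * t ^ (k - 1 - i)) ≤
      (b - a) * ((k : ℝ) * ((k : ℝ) - 1) / 2) * b ^ (k - 2) := by
  have ht : 0 ≤ t := le_trans ha h1
  have hb : 0 ≤ b := le_trans ht h2
  have hab : a ≤ b := le_trans h1 h2
  have hterm : ∀ i ∈ range k, (b ^ i - a ^ i) * t ^ (k - 1 - i) ≤
      (b - a) * (i : ℝ) * b ^ (k - 2) := by
    intro i hi
    have hik : i < k := Finset.mem_range.1 hi
    rcases Nat.eq_zero_or_pos i with rfl | hi1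
    · simp
    · -- b^i - a^i ≤ (b-a) * i * b^(i-1)
      have hgeo : (∑ m ∈ range i, b ^ m * a ^ (i - 1 - m)) * (b - a) = b ^ i - a ^ i :=
        geom_sum₂_mul b a i
      have hsb : (∑ m ∈ range i, b ^ m * a ^ (i - 1 - m)) ≤ (i : ℝ) * b ^ (i - 1) := by
        calc (∑ m ∈ range i, b ^ m * a ^ (i - 1 - m))
            ≤ ∑ m ∈ range i, b ^ (i - 1) := by
              apply Finset.sum_le_sum
              intro m hm
              have hmi : m < i := Finset.mem_range.1 hm
              calc b ^ m * a ^ (i - 1 - m) ≤ b ^ m * b ^ (i - 1 - m) := by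
                    apply mul_le_mul_of_nonneg_left (pow_le_pow_left₀ ha hab _)
                      (pow_nonneg hb _)
                _ = b ^ (i - 1) := by
                    rw [← pow_add]
                    congr 1
                    omega
          _ = (i : ℝ) * b ^ (i - 1) := by
              rw [Finset.sum_const, Finset.card_range, nsmul_eq_mul]
      have hba : b ^ i - a ^ i ≤ (b - a) * ((i : ℝ) * b ^ (i - 1)) := by
        rw [← hgeo]
        rw [mul_comm]
        exact mul_le_mul_of_nonneg_left hsb (by linarith)
      have htb : t ^ (k - 1 - i) ≤ b ^ (k - 1 - i) := pow_le_pow_left₀ ht h2 _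
      have hpow : b ^ (i - 1) * b ^ (k - 1 - i) = b ^ (k - 2) := by
        rw [← pow_add]
        congr 1
        omega
      have haipow : a ^ i ≤ b ^ i := pow_le_pow_left₀ ha hab i
      calc (b ^ i - a ^ i) * t ^ (k - 1 - i)
          ≤ (b ^ i - a ^ i) * b ^ (k - 1 - i) :=
            mul_le_mul_of_nonneg_left htb (by linarith)
        _ ≤ ((b - a) * ((i : ℝ) * b ^ (i - 1))) * b ^ (k - 1 - i) :=
            mul_le_mul_of_nonneg_right hba (pow_nonneg hb _)
        _ = (b - a) * (i : ℝ) * (b ^ (i - 1) * b ^ (k - 1 - i)) := by ring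
        _ = (b - a) * (i : ℝ) * b ^ (k - 2) := by rw [hpow]
  calc (∑ i ∈ range k, (b ^ i - a ^ i) * t ^ (k - 1 - i))
      ≤ ∑ i ∈ range k, (b - a) * (i : ℝ) * b ^ (k - 2) := Finset.sum_le_sum hterm
    _ = (b - a) * b ^ (k - 2) * (∑ i ∈ range k, (i : ℝ)) := by
        rw [Finset.mul_sum]
        exact Finset.sum_congr rfl fun i _ => by ring
    _ = (b - a) * ((k : ℝ) * ((k : ℝ) - 1) / 2) * b ^ (k - 2) := by
        have : (∑ i ∈ range k, (i : ℝ)) = (k : ℝ) * ((k : ℝ) - 1) / 2 := by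
          have h2 := congrArg (Nat.cast (R := ℝ)) (Finset.sum_range_id_mul_two k)
          push_cast [Nat.cast_sub hk] at h2
          push_cast
          linarith
        rw [this]
        ring

private lemma key (k : ℕ) (hk : 1 ≤ k) {a b t : ℝ} (ha : 0 ≤ a) (h1 : a ≤ t) (h2 : t ≤ b) :
    (b - t) * a ^ k + (t - a) * b ^ k - (b - a) * t ^ k ≤
      (b - a) * ((1 / 8) * (k : ℝ) * ((k : ℝ) - 1) * b ^ (k - 2) * (b - a) ^ 2) := by
  rw [gs_identity]
  have hS0 := gs_nonneg k ha h1 h2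
  have hS := gs_bound k hk ha h1 h2
  have hq : (b - t) * (t - a) ≤ (b - a) ^ 2 / 4 := by nlinarith [sq_nonneg (a + b - 2 * t)]
  have hq0 : 0 ≤ (b - t) * (t - a) := mul_nonneg (by linarith) (by linarith)
  have hb : 0 ≤ b := le_trans (le_trans ha h1) h2
  have hRHS0 : 0 ≤ (b - a) * ((k : ℝ) * ((k : ℝ) - 1) / 2) * b ^ (k - 2) := by
    have : (1:ℝ) ≤ (k:ℝ) := by exact_mod_cast hk
    have := pow_nonneg hb (k - 2)
    nlinarith
  calc (b - t) * (t - a) * (∑ i ∈ range k, (b ^ i - a ^ i) * t ^ (k - 1 - i))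
      ≤ ((b - a) ^ 2 / 4) * ((b - a) * ((k : ℝ) * ((k : ℝ) - 1) / 2) * b ^ (k - 2)) := by
        apply mul_le_mul hq hS hS0 (by positivity)
    _ = (b - a) * ((1 / 8) * (k : ℝ) * ((k : ℝ) - 1) * b ^ (k - 2) * (b - a) ^ 2) := by
        ring

theorem stmt5 (k : ℕ) (hk : 1 ≤ k) (M : ℕ) (hM : 2 ≤ M)
    (x lam : Fin M → ℝ) (hx0 : 0 ≤ x ⟨0, by omega⟩) (hxmono : Monotone x)
    (hlam : ∀ i, 0 ≤ lam i) (hsum : ∑ i, lam i = 1) :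
    0 ≤ (∑ i, lam i * x i ^ k) - (∑ i, lam i * x i) ^ k ∧
    (∑ i, lam i * x i ^ k) - (∑ i, lam i * x i) ^ k ≤
      (1 / 8) * (k : ℝ) * ((k : ℝ) - 1) * x ⟨M - 1, by omega⟩ ^ (k - 2) *
        (x ⟨M - 1, by omega⟩ - x ⟨0, by omega⟩) ^ 2 := by
  set a : ℝ := x ⟨0, by omega⟩ with hadef
  set b : ℝ := x ⟨M - 1, by omega⟩ with hbdef
  have hxa : ∀ i, a ≤ x i := fun i => hxmono (by simp [Fin.le_def])
  have hxb : ∀ i, x i ≤ b := fun i => hxmono (by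
    have := i.isLt
    simp only [Fin.le_def]
    omega)
  have hxnn : ∀ i, 0 ≤ x i := fun i => le_trans hx0 (hxa i)
  set μ : ℝ := ∑ i, lam i * x i with hμdef
  have hab : a ≤ b := le_trans (hxa ⟨0, by omega⟩) (hxb ⟨0, by omega⟩)
  have hμa : a ≤ μ := by
    calc a = ∑ i, lam i * a := by rw [← Finset.sum_mul, hsum, one_mul]
      _ ≤ ∑ i, lam i * x i :=
        Finset.sum_le_sum fun i _ => mul_le_mul_of_nonneg_left (hxa i) (hlam i)
  have hμb : μ ≤ b := by
    calc μ ≤ ∑ i, lam i * b :=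
        Finset.sum_le_sum fun i _ => mul_le_mul_of_nonneg_left (hxb i) (hlam i)
      _ = b := by rw [← Finset.sum_mul, hsum, one_mul]
  have ha : 0 ≤ a := hx0
  constructor
  · -- Jensen
    have hconv := (convexOn_pow (𝕜 := ℝ) k).map_sum_le (t := Finset.univ) (w := lam) (p := x)
      (fun i _ => hlam i) hsum (fun i _ => Set.mem_Ici.2 (hxnn i))
    simp only [smul_eq_mul] at hconv
    rw [← hμdef] at hconv
    linarith
  · rcases eq_or_lt_of_le hab with heq | hlt
    · have hxall : ∀ i, x i = a := fun i => le_antisymm (heq ▸ hxb i) (hxa i)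
      have h1 : (∑ i, lam i * x i ^ k) = a ^ k := by
        simp only [hxall]
        rw [← Finset.sum_mul, hsum, one_mul]
      have h2 : μ = a := by
        rw [hμdef]
        simp only [hxall]
        rw [← Finset.sum_mul, hsum, one_mul]
      rw [h1, h2, ← heq]
      simp
    · have hchord : (b - a) * (∑ i, lam i * x i ^ k) ≤ (b - μ) * a ^ k + (μ - a) * b ^ k := by
        calc (b - a) * (∑ i, lam i * x i ^ k)
            = ∑ i, lam i * ((b - a) * x i ^ k) := by
              rw [Finset.mul_sum]; exact Finset.sum_congr rfl fun i _ => by ring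
          _ ≤ ∑ i, lam i * ((b - x i) * a ^ k + (x i - a) * b ^ k) :=
              Finset.sum_le_sum fun i _ => mul_le_mul_of_nonneg_left
                (chord k ha (hxa i) (hxb i)) (hlam i)
          _ = ∑ i, (lam i * (b * a ^ k - a * b ^ k) + (lam i * x i) * (b ^ k - a ^ k)) :=
              Finset.sum_congr rfl fun i _ => by ring
          _ = (∑ i, lam i) * (b * a ^ k - a * b ^ k) +
              (∑ i, lam i * x i) * (b ^ k - a ^ k) := by
              rw [Finset.sum_add_distrib, ← Finset.sum_mul, ← Finset.sum_mul]
          _ = (b - μ) * a ^ k + (μ - a) * b ^ k := by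
              rw [hsum, ← hμdef]; ring
      have hkey := key k hk ha hμa hμb
      have hfinal : (b - a) * ((∑ i, lam i * x i ^ k) - μ ^ k) ≤
          (b - a) * ((1 / 8) * (k : ℝ) * ((k : ℝ) - 1) * b ^ (k - 2) * (b - a) ^ 2) := by
        rw [mul_sub]
        linarith [hchord, hkey]
      have hba : 0 < b - a := by linarith
      exact (mul_le_mul_iff_right₀ hba).1 hfinal
end

section
/- For all real numbers x, y and nonnegative integers r, s and positive integer d with r + s ≤ 2d, we have x^r·y^s/(1 + x² + y²)^d ≤ (1/2)^{min(r,s)}, where x^r y^s is interpreted as |x|^r·|y|^s. -/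
lemma stmt7_aux (x y : ℝ) (r s d : ℕ) (hrs : r + s ≤ 2 * d) (h : r ≤ s) :
    |x| ^ r * |y| ^ s ≤ (1 / 2 : ℝ) ^ r * (1 + x ^ 2 + y ^ 2) ^ d := by
  set a := 1 + x ^ 2 + y ^ 2 with ha_def
  have ha : (1 : ℝ) ≤ a := by nlinarith [sq_nonneg x, sq_nonneg y]
  have ha0 : (0 : ℝ) ≤ a := by linarith
  have hrd : r ≤ d := by omega
  have hxy : |x| * |y| ≤ a / 2 := by
    nlinarith [sq_nonneg (|x| - |y|), sq_abs x, sq_abs y]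
  have h1 : |x| ^ r * |y| ^ s = (|x| * |y|) ^ r * |y| ^ (s - r) := by
    rw [mul_pow, mul_assoc, ← pow_add, Nat.add_sub_cancel' h]
  have h2 : (|x| * |y|) ^ r ≤ (a / 2) ^ r :=
    pow_le_pow_left₀ (by positivity) hxy r
  have h3 : |y| ^ (s - r) ≤ a ^ (d - r) := by
    rcases le_total (|y|) 1 with hy | hy
    · calc |y| ^ (s - r) ≤ 1 := pow_le_one₀ (abs_nonneg y) hy
        _ ≤ a ^ (d - r) := one_le_pow₀ ha
    · calc |y| ^ (s - r) ≤ |y| ^ (2 * ((s - r + 1) / 2)) :=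
            pow_le_pow_right₀ hy (by omega)
        _ = (|y| ^ 2) ^ ((s - r + 1) / 2) := by rw [pow_mul]
        _ ≤ a ^ ((s - r + 1) / 2) := by
            apply pow_le_pow_left₀ (by positivity)
            rw [sq_abs]; nlinarith [sq_nonneg x]
        _ ≤ a ^ (d - r) := pow_le_pow_right₀ ha (by omega)
  calc |x| ^ r * |y| ^ s = (|x| * |y|) ^ r * |y| ^ (s - r) := h1
    _ ≤ (a / 2) ^ r * a ^ (d - r) :=
        mul_le_mul h2 h3 (by positivity) (by positivity)
    _ = (1 / 2 : ℝ) ^ r * a ^ d := by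
        rw [show a / 2 = (1 / 2) * a by ring, mul_pow, mul_assoc, ← pow_add,
          Nat.add_sub_cancel' hrd]

theorem stmt7 (x y : ℝ) (r s d : ℕ) (hd : 1 ≤ d) (hrs : r + s ≤ 2 * d) :
    |x| ^ r * |y| ^ s / (1 + x ^ 2 + y ^ 2) ^ d ≤ (1 / 2 : ℝ) ^ (min r s) := by
  have hpos : (0 : ℝ) < (1 + x ^ 2 + y ^ 2) ^ d := by positivity
  rw [div_le_iff₀ hpos]
  rcases le_total r s with h | h
  · rw [min_eq_left h]
    exact stmt7_aux x y r s d hrs h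
  · rw [min_eq_right h, mul_comm (|x| ^ r)]
    have := stmt7_aux y x s r d (by omega) h
    calc |y| ^ s * |x| ^ r ≤ (1 / 2 : ℝ) ^ s * (1 + y ^ 2 + x ^ 2) ^ d := this
      _ = (1 / 2 : ℝ) ^ s * (1 + x ^ 2 + y ^ 2) ^ d := by ring_nf
end

section
/- Let s ≥ 2 be real. For real x ∈ (0,1), h, y with (x+h)² + y² < 1 and (−x+h)² + y² < 1, set p_u = (−x+h, y), p_v = (x+h, y), q_u = (−x, 0), q_v = (x, 0), and let ẑ = Σ⁻¹(z) denote inverse stereographic projection. Then ‖p̂_u − p̂_v‖^{−2} − ‖q̂_u − q̂_v‖^{−2} = (h⁴ + y²(2 + 2x² + y²) + h²(2 − 2x² + 2y²))/(16x²) ≥ 0, with equality iff h = y = 0. -/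
noncomputable def invStereo (p : ℝ × ℝ) : ℝ × ℝ × ℝ :=
  (2 * p.1 / (1 + p.1 ^ 2 + p.2 ^ 2), 2 * p.2 / (1 + p.1 ^ 2 + p.2 ^ 2),
    1 - 2 / (1 + p.1 ^ 2 + p.2 ^ 2))

def normSq3 (v : ℝ × ℝ × ℝ) : ℝ := v.1 ^ 2 + v.2.1 ^ 2 + v.2.2 ^ 2

theorem stmt14 (s x h y : ℝ) (hs : 2 ≤ s) (hx : x ∈ Set.Ioo (0:ℝ) 1)
    (h1 : (x + h) ^ 2 + y ^ 2 < 1) (h2 : (-x + h) ^ 2 + y ^ 2 < 1) :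
    (normSq3 (invStereo (-x + h, y) - invStereo (x + h, y)))⁻¹ -
        (normSq3 (invStereo (-x, 0) - invStereo (x, 0)))⁻¹ =
      (h ^ 4 + y ^ 2 * (2 + 2 * x ^ 2 + y ^ 2) + h ^ 2 * (2 - 2 * x ^ 2 + 2 * y ^ 2)) /
        (16 * x ^ 2) ∧
    0 ≤ (h ^ 4 + y ^ 2 * (2 + 2 * x ^ 2 + y ^ 2) + h ^ 2 * (2 - 2 * x ^ 2 + 2 * y ^ 2)) /
        (16 * x ^ 2) ∧
    ((h ^ 4 + y ^ 2 * (2 + 2 * x ^ 2 + y ^ 2) + h ^ 2 * (2 - 2 * x ^ 2 + 2 * y ^ 2)) /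
        (16 * x ^ 2) = 0 ↔ h = 0 ∧ y = 0) := by
  obtain ⟨hxp, hx1⟩ := hx
  have hx0 : x ≠ 0 := ne_of_gt hxp
  have hA : (0:ℝ) < 1 + (-x + h) ^ 2 + y ^ 2 := by positivity
  have hB : (0:ℝ) < 1 + (x + h) ^ 2 + y ^ 2 := by positivity
  have hC : (0:ℝ) < 1 + x ^ 2 := by positivity
  have e1 : normSq3 (invStereo (-x + h, y) - invStereo (x + h, y)) =
      16 * x ^ 2 / ((1 + (-x + h) ^ 2 + y ^ 2) * (1 + (x + h) ^ 2 + y ^ 2)) := by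
    simp only [normSq3, invStereo, Prod.fst_sub, Prod.snd_sub]
    field_simp
    ring
  have e2 : normSq3 (invStereo (-x, 0) - invStereo (x, 0)) =
      16 * x ^ 2 / ((1 + x ^ 2) ^ 2) := by
    simp only [normSq3, invStereo, Prod.fst_sub, Prod.snd_sub]
    field_simp
    ring
  refine ⟨?_, ?_, ?_⟩
  · rw [e1, e2]
    rw [inv_div, inv_div]
    field_simp
    ring
  · apply div_nonneg
    · nlinarith [sq_nonneg h, sq_nonneg y, sq_nonneg (h * y), sq_nonneg (h ^ 2), sq_nonneg (h * x), sq_nonneg (y * x)]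
    · positivity
  · constructor
    · intro he
      have hnum : h ^ 4 + y ^ 2 * (2 + 2 * x ^ 2 + y ^ 2) + h ^ 2 * (2 - 2 * x ^ 2 + 2 * y ^ 2) = 0 := by
        have h16 : (16 : ℝ) * x ^ 2 ≠ 0 := by positivity
        field_simp at he
        linear_combination he
      have hpos : (0:ℝ) < 2 - 2 * x ^ 2 := by nlinarith
      have key : h ^ 2 * (2 - 2 * x ^ 2) ≤ 0 * (2 - 2 * x ^ 2) := by
        nlinarith [sq_nonneg (h ^ 2 + y ^ 2), sq_nonneg y, sq_nonneg (x * y)]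
      have hh : h ^ 2 = 0 :=
        le_antisymm (le_of_mul_le_mul_right key hpos) (sq_nonneg h)
      have hy2 : y ^ 2 * (2 + 2 * x ^ 2 + y ^ 2) = 0 := by
        have hh4 : h ^ 4 = 0 := by
          have : h ^ 4 = (h ^ 2) ^ 2 := by ring
          rw [this, hh]; ring
        have hz : h ^ 2 * (2 - 2 * x ^ 2 + 2 * y ^ 2) = 0 := by rw [hh]; ring
        linarith [hnum, hh4, hz]
      have hy : y ^ 2 = 0 := by
        rcases mul_eq_zero.mp hy2 with h' | h'
        · exact h'
        · nlinarith [sq_nonneg y]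
      exact ⟨(pow_eq_zero_iff two_ne_zero).mp hh, (pow_eq_zero_iff two_ne_zero).mp hy⟩
    · rintro ⟨rfl, rfl⟩
      norm_num
end
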